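/- Bicausal couplings of martingales are martingales: if P and Q are laws on path space C([0,1];ℝ^d) under which the canonical process is a martingale (in its completed canonical filtration), and π is a bicausal coupling of P and Q, then the ℝ^{2d}-valued canonical process (ω, ω̄) on the product path space is a π-martingale in its own (product-canonical) filtration. -/

import Mathlib

open MeasureTheory ProbabilityTheory unitInterval
open scoped NNReal

set_option maxHeartbeats 1600000
set_option synthInstance.maxHeartbeats 400000

noncomputable section

/-- The path space `C([0,1]; ℝ^d)` with the Borel σ-algebra of the uniform topology. -/
abbrev PathSp (d : ℕ) := C(I, EuclideanSpace ℝ (Fin d))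

instance (d : ℕ) : MeasurableSpace (PathSp d) := borel _
instance (d : ℕ) : BorelSpace (PathSp d) := ⟨rfl⟩

/-- The canonical filtration on path space: `F_t` is generated by the evaluations up to `t`. -/
def canonF (d : ℕ) : Filtration I (inferInstance : MeasurableSpace (PathSp d)) where
  seq t := ⨆ s ∈ Set.Iic t, MeasurableSpace.comap (fun ω : PathSp d => ω s) inferInstance
  mono' s t hst := biSup_mono fun u hu => Set.mem_Iic.mpr ((Set.mem_Iic.mp hu).trans hst)
  le' t := iSup₂_le fun s _ =>
    (continuous_eval_const s).measurable.comap_le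

/-- The product filtration `F_t ⊗ F_t` on `Ω × Ω`. -/
def prodF (d : ℕ) : Filtration I (inferInstance : MeasurableSpace (PathSp d × PathSp d)) where
  seq t := MeasurableSpace.comap Prod.fst (canonF d t) ⊔
    MeasurableSpace.comap Prod.snd (canonF d t)
  mono' s t hst := sup_le_sup (MeasurableSpace.comap_mono ((canonF d).mono hst))
    (MeasurableSpace.comap_mono ((canonF d).mono hst))
  le' t := sup_le_sup (MeasurableSpace.comap_mono ((canonF d).le t))
    (MeasurableSpace.comap_mono ((canonF d).le t))

/-- A coupling `π` of path-measures (first marginal `P`) is causal if for each `t` and each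
`F_t`-measurable `A`, the map `x ↦ π_x(A)` is measurable for the `P`-completion of `F_t`,
i.e. coincides `P`-a.e. with an `F_t`-measurable function. -/
def Causal (d : ℕ) [StandardBorelSpace (PathSp d)] [Nonempty (PathSp d)]
    (P : Measure (PathSp d)) (π : Measure (PathSp d × PathSp d)) [IsFiniteMeasure π] : Prop :=
  ∀ t : I, ∀ A : Set (PathSp d), MeasurableSet[canonF d t] A →
    ∃ g : PathSp d → ENNReal, Measurable[canonF d t] g ∧
      (fun x => π.condKernel x A) =ᵐ[P] g

section Aux

variable {α : Type*} {m : MeasurableSpace α} [m0 : MeasurableSpace α] {μ : Measure α}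

/-- Conditional expectation commutes with continuous linear maps. -/
lemma condexp_clm_aux {E F : Type*} [NormedAddCommGroup E] [NormedSpace ℝ E] [CompleteSpace E]
    [NormedAddCommGroup F] [NormedSpace ℝ F] [CompleteSpace F]
    (hm : m ≤ m0) [SigmaFinite (μ.trim hm)]
    (L : E →L[ℝ] F) {f : α → E} (hf : Integrable f μ) :
    (fun x => L ((μ[f|m]) x)) =ᵐ[μ] μ[fun x => L (f x)|m] := by
  refine ae_eq_condExp_of_forall_setIntegral_eq hm (L.integrable_comp hf)
    (fun s _ _ => (L.integrable_comp integrable_condExp).integrableOn)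
    (fun s hs _ => ?_) ?_
  · rw [L.integral_comp_comm integrable_condExp.integrableOn, setIntegral_condExp hm hf hs]
    exact (L.integral_comp_comm hf.integrableOn).symm
  · exact (L.continuous.comp_stronglyMeasurable
      stronglyMeasurable_condExp).aestronglyMeasurable

/-- The defining property of conditional expectation against a bounded measurable weight. -/
lemma weighted_real_aux (hm : m ≤ m0) [IsFiniteMeasure μ]
    {φ g : α → ℝ} (hφ : StronglyMeasurable[m] φ) (hφb : ∀ x, |φ x| ≤ 1)
    (hg : Integrable g μ) :
    ∫ x, φ x * g x ∂μ = ∫ x, φ x * (μ[g|m]) x ∂μ := by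
  have hφ0 : AEStronglyMeasurable φ μ := (hφ.mono hm).aestronglyMeasurable
  have h1 : Integrable (φ * g) μ :=
    hg.bdd_mul (c := 1) hφ0 (Filter.Eventually.of_forall fun x => by simpa [Real.norm_eq_abs] using hφb x)
  have h2 := condExp_mul_of_stronglyMeasurable_left hφ h1 hg
  calc ∫ x, φ x * g x ∂μ = ∫ x, (φ * g) x ∂μ := rfl
    _ = ∫ x, (μ[φ * g|m]) x ∂μ := (integral_condExp hm).symm
    _ = ∫ x, (φ * μ[g|m]) x ∂μ := integral_congr_ae h2
    _ = ∫ x, φ x * (μ[g|m]) x ∂μ := rfl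

end Aux

/-- Key lemma: for a causal coupling, set integrals (over sets of the product filtration at
time `s`) of an integrable function of the first coordinate agree with those of its
`F_s`-conditional expectation. -/
lemma causal_key (d : ℕ) [StandardBorelSpace (PathSp d)] [Nonempty (PathSp d)]
    (P : Measure (PathSp d)) [IsProbabilityMeasure P]
    (π : Measure (PathSp d × PathSp d)) [IsProbabilityMeasure π]
    (hπ1 : π.map Prod.fst = P) (hc : Causal d P π) (s : I)
    {h : PathSp d → EuclideanSpace ℝ (Fin d)} (hhm : Measurable h) (hhi : Integrable h P)
    {S : Set (PathSp d × PathSp d)} (hS : MeasurableSet[prodF d s] S) :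
    ∫ p in S, h p.1 ∂π = ∫ p in S, (P[h|canonF d s]) p.1 ∂π := by
  have hmc : (canonF d s : MeasurableSpace (PathSp d)) ≤ _ := (canonF d).le s
  set k := P[h|canonF d s] with hkdef
  have hksm : StronglyMeasurable[canonF d s] k := stronglyMeasurable_condExp
  have hksm0 : AEStronglyMeasurable k P := (hksm.mono hmc).aestronglyMeasurable
  have hki : Integrable k P := integrable_condExp
  have hπh : Integrable (fun p : PathSp d × PathSp d => h p.1) π := by
    refine (integrable_map_measure ?_ measurable_fst.aemeasurable).mp ?_
    · rw [hπ1]; exact hhm.aestronglyMeasurable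
    · rw [hπ1]; exact hhi
  have hπk : Integrable (fun p : PathSp d × PathSp d => k p.1) π := by
    refine (integrable_map_measure ?_ measurable_fst.aemeasurable).mp ?_
    · rw [hπ1]; exact hksm0
    · rw [hπ1]; exact hki
  have htot : ∫ p, h p.1 ∂π = ∫ p, k p.1 ∂π := by
    have h1 : ∫ p, h p.1 ∂π = ∫ x, h x ∂P := by
      rw [← hπ1]
      exact (integral_map measurable_fst.aemeasurable
        (by rw [hπ1]; exact hhm.aestronglyMeasurable)).symm
    have h2 : ∫ p, k p.1 ∂π = ∫ x, k x ∂P := by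
      rw [← hπ1]
      exact (integral_map measurable_fst.aemeasurable (by rw [hπ1]; exact hksm0)).symm
    rw [h1, h2, hkdef, integral_condExp hmc]
  have heq : (prodF d s : MeasurableSpace (PathSp d × PathSp d)) =
      MeasurableSpace.generateFrom (Set.image2 (· ×ˢ ·)
        {A : Set (PathSp d) | MeasurableSet[canonF d s] A}
        {B : Set (PathSp d) | MeasurableSet[canonF d s] B}) :=
    (@generateFrom_prod _ _ (canonF d s) (canonF d s)).symm
  refine MeasurableSpace.induction_on_inter (m := prodF d s)
    (C := fun S _ => ∫ p in S, h p.1 ∂π = ∫ p in S, k p.1 ∂π)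
    heq (@isPiSystem_prod _ _ (canonF d s) (canonF d s)) (by simp) ?_ ?_ ?_ S hS
  · -- rectangles
    rintro _ ⟨A, hA, B, hB, rfl⟩
    obtain ⟨g, hgm, hgae⟩ := hc s B hB
    set κ := π.condKernel with hκdef
    have hA0 : MeasurableSet A := hmc _ hA
    have hB0 : MeasurableSet B := hmc _ hB
    have hπd : P ⊗ₘ π.condKernel = π := by
      rw [← hπ1]; exact π.disintegrate π.condKernel
    set g₁ : PathSp d → ℝ := fun x => (min (g x) 1).toReal with hg₁def
    have hg₁sm : StronglyMeasurable[canonF d s] g₁ :=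
      ((hgm.min measurable_const).ennreal_toReal).stronglyMeasurable
    have hg₁b : ∀ x, |g₁ x| ≤ 1 := fun x => by
      rw [hg₁def, abs_of_nonneg ENNReal.toReal_nonneg]
      calc (min (g x) 1).toReal ≤ (1 : ENNReal).toReal :=
            ENNReal.toReal_mono ENNReal.one_ne_top (min_le_right _ _)
        _ = 1 := ENNReal.toReal_one
    have hκB : ∀ᵐ x ∂P, (κ x B).toReal = g₁ x := by
      filter_upwards [hgae] with x hx
      show ((κ x) B).toReal = (min (g x) 1).toReal
      rw [← hx, min_eq_left prob_le_one]
    have hcompProd : ∀ (F : PathSp d → EuclideanSpace ℝ (Fin d)),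
        Integrable (fun p : PathSp d × PathSp d => F p.1) π →
        ∫ p in A ×ˢ B, F p.1 ∂π = ∫ x in A, (κ x B).toReal • F x ∂P := by
      intro F hF
      rw [← hπd, Measure.setIntegral_compProd hA0 hB0 (by rw [hπd]; exact hF.integrableOn)]
      refine setIntegral_congr_ae hA0 (Filter.Eventually.of_forall fun x _ => ?_)
      exact setIntegral_const (F x)
    set φ : PathSp d → ℝ := A.indicator g₁ with hφdef
    have hφsm : StronglyMeasurable[canonF d s] φ := hg₁sm.indicator hA
    have hφb : ∀ x, |φ x| ≤ 1 := by
      intro x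
      by_cases hx : x ∈ A <;> simp [hφdef, Set.indicator, hx, hg₁b x]
    have hindic : ∀ (F : PathSp d → EuclideanSpace ℝ (Fin d)),
        ∫ x in A, g₁ x • F x ∂P = ∫ x, φ x • F x ∂P := by
      intro F
      rw [← integral_indicator hA0]
      refine integral_congr_ae (Filter.Eventually.of_forall fun x => ?_)
      by_cases hx : x ∈ A <;> simp [hφdef, hx]
    have hIφh : Integrable (fun x => φ x • h x) P := by
      refine hhi.mono (((hφsm.mono hmc).aestronglyMeasurable).smul hhm.aestronglyMeasurable)
        (Filter.Eventually.of_forall fun x => ?_)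
      rw [norm_smul]
      calc ‖φ x‖ * ‖h x‖ ≤ 1 * ‖h x‖ := by
            gcongr
            simpa [Real.norm_eq_abs] using hφb x
        _ = ‖h x‖ := one_mul _
    have hIφk : Integrable (fun x => φ x • k x) P := by
      refine hki.mono (((hφsm.mono hmc).aestronglyMeasurable).smul hksm0)
        (Filter.Eventually.of_forall fun x => ?_)
      rw [norm_smul]
      calc ‖φ x‖ * ‖k x‖ ≤ 1 * ‖k x‖ := by
            gcongr
            simpa [Real.norm_eq_abs] using hφb x
        _ = ‖k x‖ := one_mul _
    have central : ∫ x, φ x • h x ∂P = ∫ x, φ x • k x ∂P := by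
      refine PiLp.ext fun i => ?_
      set L : EuclideanSpace ℝ (Fin d) →L[ℝ] ℝ := EuclideanSpace.proj i with hLdef
      calc (∫ x, φ x • h x ∂P) i
          = L (∫ x, φ x • h x ∂P) := rfl
        _ = ∫ x, L (φ x • h x) ∂P := (L.integral_comp_comm hIφh).symm
        _ = ∫ x, φ x * L (h x) ∂P := by
            refine integral_congr_ae (Filter.Eventually.of_forall fun x => ?_)
            show L (φ x • h x) = φ x * L (h x)
            rw [L.map_smul, smul_eq_mul]
        _ = ∫ x, φ x * (P[fun y => L (h y)|canonF d s]) x ∂P :=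
            weighted_real_aux hmc hφsm hφb (L.integrable_comp hhi)
        _ = ∫ x, φ x * L (k x) ∂P := by
            refine integral_congr_ae ?_
            filter_upwards [condexp_clm_aux hmc L hhi] with x hx
            rw [← hx]
        _ = ∫ x, L (φ x • k x) ∂P := by
            refine integral_congr_ae (Filter.Eventually.of_forall fun x => ?_)
            show φ x * L (k x) = L (φ x • k x)
            rw [L.map_smul, smul_eq_mul]
        _ = L (∫ x, φ x • k x ∂P) := L.integral_comp_comm hIφk
        _ = (∫ x, φ x • k x ∂P) i := rfl
    have hrepl : ∀ (F : PathSp d → EuclideanSpace ℝ (Fin d)),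
        ∫ x in A, (κ x B).toReal • F x ∂P = ∫ x in A, g₁ x • F x ∂P := by
      intro F
      refine setIntegral_congr_ae hA0 (hκB.mono fun x hx _ => by rw [hx])
    calc ∫ p in A ×ˢ B, h p.1 ∂π
        = ∫ x in A, (κ x B).toReal • h x ∂P := hcompProd h hπh
      _ = ∫ x in A, g₁ x • h x ∂P := hrepl h
      _ = ∫ x, φ x • h x ∂P := hindic h
      _ = ∫ x, φ x • k x ∂P := central
      _ = ∫ x in A, g₁ x • k x ∂P := (hindic k).symm
      _ = ∫ x in A, (κ x B).toReal • k x ∂P := (hrepl k).symm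
      _ = ∫ p in A ×ˢ B, k p.1 ∂π := (hcompProd k hπk).symm
  · -- complements
    intro T hT hCT
    have hT0 : MeasurableSet T := (prodF d).le s _ hT
    have e1 := integral_add_compl hT0 hπh
    have e2 := integral_add_compl hT0 hπk
    have : ∫ p in T, h p.1 ∂π + ∫ p in Tᶜ, h p.1 ∂π
        = ∫ p in T, k p.1 ∂π + ∫ p in Tᶜ, k p.1 ∂π := by
      rw [e1, e2, htot]
    rw [hCT] at this
    exact add_left_cancel this
  · -- countable disjoint unions
    intro f hdisj hmeas hCf
    have hmeas0 : ∀ i, MeasurableSet (f i) := fun i => (prodF d).le s _ (hmeas i)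
    have H1 := hasSum_integral_iUnion hmeas0 hdisj
      (hπh.integrableOn (s := ⋃ i, f i))
    have H2 := hasSum_integral_iUnion hmeas0 hdisj
      (hπk.integrableOn (s := ⋃ i, f i))
    have H2' : HasSum (fun n => ∫ p in f n, h p.1 ∂π) (∫ p in ⋃ n, f n, k p.1 ∂π) := by
      refine H2.congr_fun fun n => hCf n
    exact H1.unique H2'

/-- Bicausal couplings of martingale laws are martingales: if the canonical process is a
martingale under both `P` and `Q` and `π` is a bicausal coupling of `P` and `Q`, then the
`ℝ^{2d}`-valued canonical process on `Ω × Ω` is a `π`-martingale in the product canonical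
filtration. -/
theorem stmt19 (d : ℕ) [StandardBorelSpace (PathSp d)] [Nonempty (PathSp d)]
    (P Q : Measure (PathSp d)) [IsProbabilityMeasure P] [IsProbabilityMeasure Q]
    (hP : Martingale (fun (t : I) (ω : PathSp d) => ω t) (canonF d) P)
    (hQ : Martingale (fun (t : I) (ω : PathSp d) => ω t) (canonF d) Q)
    (π : Measure (PathSp d × PathSp d)) [IsProbabilityMeasure π]
    (hπ1 : π.map Prod.fst = P) (hπ2 : π.map Prod.snd = Q)
    (hc : Causal d P π)
    (hc' : Causal d Q (π.map Prod.swap)) :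
    Martingale (fun (t : I) (p : PathSp d × PathSp d) => (p.1 t, p.2 t)) (prodF d) π := by
  -- measurability of evaluations
  have heval : ∀ u : I, Measurable fun ω : PathSp d => ω u := fun u =>
    (continuous_eval_const u).measurable
  have hevalF : ∀ u t : I, u ≤ t → @Measurable _ _ (canonF d t) _ fun ω : PathSp d => ω u := by
    intro u t hut
    refine measurable_iff_comap_le.mpr ?_
    exact le_biSup
      (fun v : I => MeasurableSpace.comap (fun ω : PathSp d => ω v) inferInstance)
      (Set.mem_Iic.mpr hut)
  have hfstF : ∀ t : I, @Measurable _ _ (prodF d t) (canonF d t)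
      (Prod.fst : PathSp d × PathSp d → PathSp d) := fun t =>
    measurable_iff_comap_le.mpr le_sup_left
  have hsndF : ∀ t : I, @Measurable _ _ (prodF d t) (canonF d t)
      (Prod.snd : PathSp d × PathSp d → PathSp d) := fun t =>
    measurable_iff_comap_le.mpr le_sup_right
  have hadap : StronglyAdapted (prodF d) fun (t : I) (p : PathSp d × PathSp d) => (p.1 t, p.2 t) := by
    intro t
    have h1 : @Measurable _ _ (prodF d t) _ fun p : PathSp d × PathSp d => p.1 t :=
      (hevalF t t le_rfl).comp (hfstF t)
    have h2 : @Measurable _ _ (prodF d t) _ fun p : PathSp d × PathSp d => p.2 t :=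
      (hevalF t t le_rfl).comp (hsndF t)
    exact (h1.prodMk h2).stronglyMeasurable
  -- integrability of evaluations under π
  have hIh1 : ∀ u : I, Integrable (fun p : PathSp d × PathSp d => p.1 u) π := by
    intro u
    refine (integrable_map_measure (g := fun ω : PathSp d => ω u)
      ?_ measurable_fst.aemeasurable).mp ?_
    · rw [hπ1]; exact (heval u).aestronglyMeasurable
    · rw [hπ1]; exact hP.integrable u
  have hIh2 : ∀ u : I, Integrable (fun p : PathSp d × PathSp d => p.2 u) π := by
    intro u
    refine (integrable_map_measure (g := fun ω : PathSp d => ω u)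
      ?_ measurable_snd.aemeasurable).mp ?_
    · rw [hπ2]; exact (heval u).aestronglyMeasurable
    · rw [hπ2]; exact hQ.integrable u
  refine ⟨hadap, ?_⟩
  intro s t hst
  have hmprod : (prodF d s : MeasurableSpace (PathSp d × PathSp d)) ≤ _ := (prodF d).le s
  haveI : IsProbabilityMeasure (π.map Prod.swap) :=
    Measure.isProbabilityMeasure_map measurable_swap.aemeasurable
  have hπ2' : (π.map Prod.swap).map Prod.fst = Q := by
    rw [Measure.map_map measurable_fst measurable_swap]
    have hfs : (Prod.fst ∘ Prod.swap : PathSp d × PathSp d → PathSp d) = Prod.snd := rfl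
    rw [hfs, hπ2]
  have hswapm : @Measurable _ _ (prodF d s)
      (@Prod.instMeasurableSpace _ _ (canonF d s) (canonF d s)) (Prod.swap) := by
    refine Measurable.prod ?_ ?_
    · exact hsndF s
    · exact hfstF s
  refine (ae_eq_condExp_of_forall_setIntegral_eq hmprod
    ((hIh1 t).prodMk (hIh2 t))
    (fun S _ _ => ((hIh1 s).prodMk (hIh2 s)).integrableOn)
    (fun S hS _ => ?_)
    ((hadap s).aestronglyMeasurable)).symm
  have hS0 : MeasurableSet S := hmprod _ hS
  have hS' : MeasurableSet[prodF d s] (Prod.swap ⁻¹' S) := hswapm hS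
  have hS'0 : MeasurableSet (Prod.swap ⁻¹' S) := hmprod _ hS'
  -- first component
  have c1 : ∫ p in S, p.1 t ∂π = ∫ p in S, p.1 s ∂π := by
    rw [causal_key d P π hπ1 hc s (heval t) (hP.integrable t) hS]
    refine setIntegral_congr_ae hS0 ?_
    have hae : (fun x : PathSp d => (P[fun ω : PathSp d => ω t|canonF d s]) x)
        =ᵐ[π.map Prod.fst] fun ω : PathSp d => ω s := by
      rw [hπ1]; exact hP.condExp_ae_eq hst
    have h2 := ae_eq_comp (measurable_fst.aemeasurable (μ := π)) hae
    exact h2.mono fun p hp _ => hp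
  -- second component, via swap
  have htr : ∀ u : I,
      ∫ p in Prod.swap ⁻¹' S, p.1 u ∂(π.map Prod.swap) = ∫ p in S, p.2 u ∂π := by
    intro u
    rw [setIntegral_map (f := fun p : PathSp d × PathSp d => p.1 u) hS'0
      (((heval u).comp measurable_fst).aestronglyMeasurable) measurable_swap.aemeasurable]
    have hpre : (Prod.swap ⁻¹' (Prod.swap ⁻¹' S) : Set (PathSp d × PathSp d)) = S := by
      ext p; simp
    rw [hpre]
    rfl
  have c2 : ∫ p in S, p.2 t ∂π = ∫ p in S, p.2 s ∂π := by
    rw [← htr t, ← htr s]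
    rw [causal_key d Q (π.map Prod.swap) hπ2' hc' s (heval t) (hQ.integrable t) hS']
    refine setIntegral_congr_ae hS'0 ?_
    have hae : (fun x : PathSp d => (Q[fun ω : PathSp d => ω t|canonF d s]) x)
        =ᵐ[(π.map Prod.swap).map Prod.fst] fun ω : PathSp d => ω s := by
      rw [hπ2']; exact hQ.condExp_ae_eq hst
    have h2 := ae_eq_comp (measurable_fst.aemeasurable (μ := π.map Prod.swap)) hae
    exact h2.mono fun p hp _ => hp
  rw [integral_pair ((hIh1 s).integrableOn) ((hIh2 s).integrableOn),
    integral_pair ((hIh1 t).integrableOn) ((hIh2 t).integrableOn)]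
  rw [Prod.mk.injEq]
  exact ⟨c1.symm, c2.symm⟩

end
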